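/- arXiv:2009.09612 — 2 statements merged into one kernel-verified Lean document; each statement's English description precedes it below -/
import Mathlib

section
/- Let μ be a finite measure on a normed space X and fix x, y, ε. For two classifiers f¹, f², μ(B_insecure(x, y, f^en, ε)) ≤ μ(B_insecure(x, y, f¹, ε)) + μ(B_insecure(x, y, f², ε)) − μ(S₀₀), where S₀₀ = B_insecure(x, y, f¹, ε) ∩ B_insecure(x, y, f², ε) and f^en = (1/2)f¹ + (1/2)f². -/
def ballSet {X : Type*} [NormedAddCommGroup X] [NormedSpace ℝ X] (x : X) (ε : ℝ) : Set X :=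
  {x' | ‖x' - x‖ ≤ ε}

def Bsecure {X : Type*} [NormedAddCommGroup X] [NormedSpace ℝ X] {M : ℕ}
    (x : X) (y : Fin M) (f : X → Fin M → ℝ) (ε : ℝ) : Set X :=
  {x' | ‖x' - x‖ ≤ ε ∧ ∀ j, f x' y ≥ f x' j}

def Binsecure {X : Type*} [NormedAddCommGroup X] [NormedSpace ℝ X] {M : ℕ}
    (x : X) (y : Fin M) (f : X → Fin M → ℝ) (ε : ℝ) : Set X :=
  ballSet x ε \ Bsecure x y f ε

open MeasureTheory in
theorem measure_ensemble_insecure_le {X : Type*} [NormedAddCommGroup X]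
    [NormedSpace ℝ X] [MeasurableSpace X] (μ : Measure X) [IsFiniteMeasure μ]
    {M : ℕ} (f1 f2 fen : X → Fin M → ℝ)
    (hfen : ∀ x j, fen x j = (1/2) * f1 x j + (1/2) * f2 x j)
    (x : X) (y : Fin M) (ε : ℝ)
    (h1 : MeasurableSet (Binsecure x y f1 ε))
    (h2 : MeasurableSet (Binsecure x y f2 ε)) :
    μ (Binsecure x y fen ε) ≤
      μ (Binsecure x y f1 ε) + μ (Binsecure x y f2 ε)
        - μ (Binsecure x y f1 ε ∩ Binsecure x y f2 ε) := by
  have hsub : Binsecure x y fen ε ⊆ Binsecure x y f1 ε ∪ Binsecure x y f2 ε := by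
    intro x' hx'
    obtain ⟨hball, hnsec⟩ := hx'
    by_contra hc
    rw [Set.mem_union] at hc
    push_neg at hc
    obtain ⟨hc1, hc2⟩ := hc
    simp only [Binsecure, Set.mem_diff, not_and, not_not] at hc1 hc2
    have hs1 := hc1 hball
    have hs2 := hc2 hball
    exact hnsec ⟨hball, fun j => by
      rw [hfen, hfen]
      have := hs1.2 j
      have := hs2.2 j
      linarith⟩
  have hkey : μ (Binsecure x y f1 ε ∪ Binsecure x y f2 ε) +
      μ (Binsecure x y f1 ε ∩ Binsecure x y f2 ε) =
      μ (Binsecure x y f1 ε) + μ (Binsecure x y f2 ε) :=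
    measure_union_add_inter _ h2
  refine ENNReal.le_sub_of_add_le_right (measure_ne_top μ _) ?_
  calc μ (Binsecure x y fen ε) + μ (Binsecure x y f1 ε ∩ Binsecure x y f2 ε)
        ≤ μ (Binsecure x y f1 ε ∪ Binsecure x y f2 ε) +
          μ (Binsecure x y f1 ε ∩ Binsecure x y f2 ε) :=
          add_le_add_left (measure_mono hsub) _
      _ = _ := hkey
end

section
/- Let f¹, …, f^N : X → (Fin M → ℝ) and f^en their average. Fix a point x' in the ball B(x, ε). If the number of members for which x' is insecure is k, and every member for which x' is secure has margin f^n_y(x') − f^n_j(x') ≥ δ for all j ≠ y, while every member for which x' is insecure has bounded deficit f^n_j(x') − f^n_y(x') ≤ C for all j, and (N − k)·δ ≥ k·C, then x' ∈ B_secure(x, y, f^en, ε). -/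
theorem secure_members_outvote {X : Type*} [NormedAddCommGroup X]
    [NormedSpace ℝ X] {M N : ℕ}
    (f : Fin N → X → Fin M → ℝ) (fen : X → Fin M → ℝ)
    (hfen : ∀ x j, fen x j = (1 / (N : ℝ)) * ∑ n, f n x j)
    (x x' : X) (y : Fin M) (ε δ C : ℝ) (hδ : 0 ≤ δ) (hC : 0 ≤ C)
    (hx' : x' ∈ ballSet x ε) (k : ℕ)
    (hk : {n : Fin N | ¬ ∀ j, f n x' y ≥ f n x' j}.ncard = k)
    (hsec : ∀ n, (∀ j, f n x' y ≥ f n x' j) →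
      ∀ j, j ≠ y → f n x' y - f n x' j ≥ δ)
    (hins : ∀ n, (¬ ∀ j, f n x' y ≥ f n x' j) →
      ∀ j, f n x' j - f n x' y ≤ C)
    (hbal : ((N : ℝ) - (k : ℝ)) * δ ≥ (k : ℝ) * C) :
    x' ∈ Bsecure x y fen ε := by
  classical
  refine ⟨hx', fun j => ?_⟩
  rw [hfen, hfen]
  by_cases hjy : j = y
  · subst hjy; exact le_refl _
  apply mul_le_mul_of_nonneg_left _ (by positivity)
  rw [← sub_nonneg, ← Finset.sum_sub_distrib]
  set P : Fin N → Prop := fun n => ∀ j, f n x' y ≥ f n x' j with hP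
  have hcard : (Finset.univ.filter (fun n => ¬ P n)).card = k := by
    rw [← hk, ← Set.ncard_coe_finset]; congr 1; ext n; simp [hP]
  have hkN : k ≤ N := by
    rw [← hcard]; simpa using Finset.card_filter_le Finset.univ (fun n => ¬ P n)
  have hcard2 : (Finset.univ.filter P).card = N - k := by
    have h := Finset.card_filter_add_card_filter_not (s := (Finset.univ : Finset (Fin N))) (p := P)
    simp only [Finset.card_univ, Fintype.card_fin] at h
    omega
  rw [← Finset.sum_filter_add_sum_filter_not Finset.univ P]
  have h1 : ((N - k : ℕ) : ℝ) * δ ≤ ∑ n ∈ Finset.univ.filter P, (f n x' y - f n x' j) := by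
    rw [← hcard2]
    calc ((Finset.univ.filter P).card : ℝ) * δ = ∑ _n ∈ Finset.univ.filter P, δ := by
          rw [Finset.sum_const, nsmul_eq_mul]
      _ ≤ _ := Finset.sum_le_sum (fun n hn => hsec n (Finset.mem_filter.mp hn).2 j hjy)
  have h2 : ((k : ℝ)) * (-C) ≤ ∑ n ∈ Finset.univ.filter (fun n => ¬ P n), (f n x' y - f n x' j) := by
    rw [← hcard]
    calc ((Finset.univ.filter (fun n => ¬ P n)).card : ℝ) * (-C)
        = ∑ _n ∈ Finset.univ.filter (fun n => ¬ P n), (-C) := by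
          rw [Finset.sum_const, nsmul_eq_mul]
      _ ≤ _ := Finset.sum_le_sum (fun n hn => by
          have := hins n (Finset.mem_filter.mp hn).2 j; linarith)
  have hNk : ((N - k : ℕ) : ℝ) = (N : ℝ) - k := by
    rw [Nat.cast_sub hkN]
  nlinarith [h1, h2]
end
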